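/- Let D, d be positive integers and for each i ∈ {1, …, d} let α^{(i)} ∈ ℕ^D, and assume the exponents are coherent: for all ℓ ∈ {1, …, D} and all i, k ∈ {1, …, d}, if α_ℓ^{(i)} > 0 and α_ℓ^{(k)} > 0 then α_ℓ^{(i)} = α_ℓ^{(k)}. Define the monomial maps φ_i : ℝ^D → ℝ by φ_i(θ) = ∏_{ℓ=1}^D θ_ℓ^{α_ℓ^{(i)}}. Then for every θ ∈ ℝ^D with θ_ℓ ≠ 0 for all ℓ, and for all i, j ∈ {1, …, d}, the Lie bracket [∇φ_i, ∇φ_j](θ) := ∂(∇φ_j)(θ) ∇φ_i(θ) − ∂(∇φ_i)(θ) ∇φ_j(θ) belongs to the linear span of {∇φ_i(θ), ∇φ_j(θ)} in ℝ^D. -/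

import Mathlib

namespace MonomialBracketAux

variable {D : ℕ}

/-- The monomial map. -/
def P (a : Fin D → ℕ) (x : EuclideanSpace ℝ (Fin D)) : ℝ := ∏ m, x m ^ a m

/-- Exponent vector with one subtracted at `ℓ`. -/
def da (a : Fin D → ℕ) (ℓ : Fin D) : Fin D → ℕ := Function.update a ℓ (a ℓ - 1)

/-- Coordinate `ℓ` of the gradient of `P a`. -/
noncomputable def g (a : Fin D → ℕ) (ℓ : Fin D) (x : EuclideanSpace ℝ (Fin D)) : ℝ :=
  (a ℓ : ℝ) * P (da a ℓ) x

/-- Gradient vector field of `P a`. -/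
noncomputable def G (a : Fin D → ℕ) (x : EuclideanSpace ℝ (Fin D)) :
    EuclideanSpace ℝ (Fin D) := WithLp.toLp 2 (fun ℓ => g a ℓ x)

/-- The differential of `P a` as a continuous linear map. -/
noncomputable def L (a : Fin D → ℕ) (x : EuclideanSpace ℝ (Fin D)) :
    EuclideanSpace ℝ (Fin D) →L[ℝ] ℝ :=
  ∑ ℓ, (g a ℓ x) • EuclideanSpace.proj ℓ

lemma L_apply (a : Fin D → ℕ) (x v : EuclideanSpace ℝ (Fin D)) :
    L a x v = ∑ ℓ, g a ℓ x * v ℓ := by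
  simp [L]

lemma g_alt (a : Fin D → ℕ) (ℓ : Fin D) (x : EuclideanSpace ℝ (Fin D)) :
    g a ℓ x = (∏ m ∈ Finset.univ.erase ℓ, x m ^ a m) * ((a ℓ : ℝ) * x ℓ ^ (a ℓ - 1)) := by
  unfold g P
  rw [← Finset.mul_prod_erase Finset.univ _ (Finset.mem_univ ℓ)]
  rw [Finset.prod_congr rfl (fun m hm => by
    rw [da, Function.update_of_ne (Finset.ne_of_mem_erase hm)])]
  simp [da]
  ring

lemma hasFDerivAt_P (a : Fin D → ℕ) (x : EuclideanSpace ℝ (Fin D)) :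
    HasFDerivAt (P a) (L a x) x := by
  have h : ∀ ℓ ∈ Finset.univ, HasFDerivAt (fun y : EuclideanSpace ℝ (Fin D) => y ℓ ^ a ℓ)
      (((a ℓ : ℝ) * x ℓ ^ (a ℓ - 1)) • EuclideanSpace.proj (𝕜 := ℝ) ℓ) x := by
    intro ℓ _
    exact (hasDerivAt_pow (a ℓ) (x ℓ)).comp_hasFDerivAt x
      (EuclideanSpace.proj (𝕜 := ℝ) ℓ).hasFDerivAt
  have := HasFDerivAt.finset_prod h
  have heq : (∑ ℓ, (∏ m ∈ Finset.univ.erase ℓ, x m ^ a m) •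
      (((a ℓ : ℝ) * x ℓ ^ (a ℓ - 1)) • EuclideanSpace.proj (𝕜 := ℝ) ℓ)) = L a x := by
    unfold L
    refine Finset.sum_congr rfl fun ℓ _ => ?_
    rw [g_alt, smul_smul]
  exact heq ▸ this

lemma hasGradientAt_P (a : Fin D → ℕ) (x : EuclideanSpace ℝ (Fin D)) :
    HasGradientAt (P a) (G a x) x := by
  rw [hasGradientAt_iff_hasFDerivAt]
  have : (InnerProductSpace.toDual ℝ (EuclideanSpace ℝ (Fin D))) (G a x) = L a x := by
    ext v
    rw [InnerProductSpace.toDual_apply_apply, L_apply, PiLp.inner_apply]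
    simp [G, mul_comm]
  rw [this]
  exact hasFDerivAt_P a x

lemma gradient_P (a : Fin D → ℕ) (x : EuclideanSpace ℝ (Fin D)) :
    gradient (P a) x = G a x := (hasGradientAt_P a x).gradient

/-- The Jacobian of the gradient field `G a`. -/
noncomputable def J (a : Fin D → ℕ) (x : EuclideanSpace ℝ (Fin D)) :
    EuclideanSpace ℝ (Fin D) →L[ℝ] EuclideanSpace ℝ (Fin D) :=
  ((PiLp.continuousLinearEquiv 2 ℝ (fun _ : Fin D => ℝ)).symm :
      (Fin D → ℝ) →L[ℝ] EuclideanSpace ℝ (Fin D)).comp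
    (ContinuousLinearMap.pi fun ℓ => (a ℓ : ℝ) • L (da a ℓ) x)

lemma J_apply (a : Fin D → ℕ) (x v : EuclideanSpace ℝ (Fin D)) (ℓ : Fin D) :
    J a x v ℓ = (a ℓ : ℝ) * L (da a ℓ) x v := rfl

lemma hasFDerivAt_G (a : Fin D → ℕ) (x : EuclideanSpace ℝ (Fin D)) :
    HasFDerivAt (G a) (J a x) x := by
  have h : ∀ ℓ, HasFDerivAt (fun y : EuclideanSpace ℝ (Fin D) => g a ℓ y)
      ((a ℓ : ℝ) • L (da a ℓ) x) x := fun ℓ =>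
    ((hasFDerivAt_P (da a ℓ) x).const_mul ((a ℓ : ℝ)))
  have h2 : HasFDerivAt (fun y : EuclideanSpace ℝ (Fin D) => fun ℓ => g a ℓ y)
      (ContinuousLinearMap.pi fun ℓ => (a ℓ : ℝ) • L (da a ℓ) x) x :=
    hasFDerivAt_pi.mpr h
  exact ((PiLp.continuousLinearEquiv 2 ℝ (fun _ : Fin D => ℝ)).symm.hasFDerivAt).comp x h2

variable {θ : EuclideanSpace ℝ (Fin D)} (hθ : ∀ ℓ, θ ℓ ≠ 0)
include hθ

lemma aP_da (a : Fin D → ℕ) (ℓ : Fin D) :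
    (a ℓ : ℝ) * P (da a ℓ) θ = (a ℓ : ℝ) * P a θ / θ ℓ := by
  rcases Nat.eq_zero_or_pos (a ℓ) with h | h
  · simp [h]
  · have hP : P a θ = θ ℓ ^ a ℓ * ∏ m ∈ Finset.univ.erase ℓ, θ m ^ a m := by
      rw [P, ← Finset.mul_prod_erase Finset.univ _ (Finset.mem_univ ℓ)]
    have hPd : P (da a ℓ) θ = θ ℓ ^ (a ℓ - 1) * ∏ m ∈ Finset.univ.erase ℓ, θ m ^ a m := by
      rw [P, ← Finset.mul_prod_erase Finset.univ _ (Finset.mem_univ ℓ)]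
      congr 1
      · simp [da]
      · exact Finset.prod_congr rfl fun m hm => by
          rw [da, Function.update_of_ne (Finset.ne_of_mem_erase hm)]
    have hpow : θ ℓ ^ a ℓ = θ ℓ ^ (a ℓ - 1) * θ ℓ := by
      rw [← pow_succ, Nat.sub_add_cancel h]
    rw [hP, hPd, hpow]
    field_simp [hθ ℓ]

lemma g_div (a : Fin D → ℕ) (ℓ : Fin D) :
    g a ℓ θ = (a ℓ : ℝ) * P a θ / θ ℓ := aP_da hθ a ℓ

/-- Key sum identity. -/
lemma key (a b : Fin D → ℕ) (ℓ : Fin D) :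
    (a ℓ : ℝ) * (∑ m, g (da a ℓ) m θ * g b m θ) =
      ((a ℓ : ℝ) * (∑ m, (a m : ℝ) * (b m : ℝ) / θ m ^ 2) -
        (a ℓ : ℝ) * (b ℓ : ℝ) / θ ℓ ^ 2) * (P a θ / θ ℓ) * P b θ := by
  rcases Nat.eq_zero_or_pos (a ℓ) with h | h
  · simp [h]
  have hA : (a ℓ : ℝ) ≠ 0 := Nat.cast_ne_zero.mpr h.ne'
  have hsum : ∀ m, g (da a ℓ) m θ * g b m θ =
      P (da a ℓ) θ * P b θ * ((da a ℓ m : ℝ) * (b m : ℝ) / θ m ^ 2) := by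
    intro m
    rw [g_div hθ, g_div hθ]
    field_simp [hθ m]
  rw [Finset.sum_congr rfl fun m _ => hsum m, ← Finset.mul_sum]
  have hsplit : ∀ c : Fin D → ℕ, (∑ m, (c m : ℝ) * (b m : ℝ) / θ m ^ 2) =
      (c ℓ : ℝ) * (b ℓ : ℝ) / θ ℓ ^ 2 +
        ∑ m ∈ Finset.univ.erase ℓ, (c m : ℝ) * (b m : ℝ) / θ m ^ 2 := fun c =>
    (Finset.add_sum_erase Finset.univ _ (Finset.mem_univ ℓ)).symm
  have herase : ∑ m ∈ Finset.univ.erase ℓ, ((da a ℓ m : ℝ) * (b m : ℝ) / θ m ^ 2) =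
      ∑ m ∈ Finset.univ.erase ℓ, ((a m : ℝ) * (b m : ℝ) / θ m ^ 2) :=
    Finset.sum_congr rfl fun m hm => by
      rw [da, Function.update_of_ne (Finset.ne_of_mem_erase hm)]
  have hQ : P (da a ℓ) θ = P a θ / θ ℓ :=
    mul_left_cancel₀ hA ((aP_da hθ a ℓ).trans (mul_div_assoc _ _ _))
  have hA' : (da a ℓ ℓ : ℝ) = (a ℓ : ℝ) - 1 := by
    rw [da, Function.update_self, Nat.cast_sub h, Nat.cast_one]
  rw [hsplit (da a ℓ), hsplit a, herase, hQ, hA']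
  have hℓ := hθ ℓ
  field_simp
  ring

end MonomialBracketAux


open MonomialBracketAux in
/-- Let `φ i (θ) = ∏ ℓ, θ ℓ ^ α i ℓ` be monomial maps with coherent
exponents (any variable appearing in two monomials does so with the same exponent).
Then at every point `θ` with all coordinates nonzero, the Lie bracket
`[∇φ_i, ∇φ_j](θ) = ∂(∇φ_j)(θ) ∇φ_i(θ) − ∂(∇φ_i)(θ) ∇φ_j(θ)` lies in the span of
`∇φ_i(θ)` and `∇φ_j(θ)`. -/
theorem monomial_lie_bracket_in_span
    (D d : ℕ) (hD : 0 < D) (hd : 0 < d)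
    (α : Fin d → Fin D → ℕ)
    (hcoh : ∀ (ℓ : Fin D) (i k : Fin d), 0 < α i ℓ → 0 < α k ℓ → α i ℓ = α k ℓ)
    (φ : Fin d → EuclideanSpace ℝ (Fin D) → ℝ)
    (hφ : ∀ (i : Fin d) (θ : EuclideanSpace ℝ (Fin D)), φ i θ = ∏ ℓ, θ ℓ ^ α i ℓ)
    (θ : EuclideanSpace ℝ (Fin D)) (hθ : ∀ ℓ, θ ℓ ≠ 0)
    (i j : Fin d) :
    fderiv ℝ (fun x => gradient (φ j) x) θ (gradient (φ i) θ) -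
      fderiv ℝ (fun x => gradient (φ i) x) θ (gradient (φ j) θ) ∈
    Submodule.span ℝ {gradient (φ i) θ, gradient (φ j) θ} := by
  have hφP : ∀ k, φ k = P (α k) := fun k => funext (hφ k)
  have hgradfun : ∀ k, (fun x => gradient (φ k) x) = G (α k) := fun k =>
    funext fun x => by rw [hφP k]; exact gradient_P _ x
  have hg : ∀ k, gradient (φ k) θ = G (α k) θ := fun k => by
    rw [hφP k]; exact gradient_P _ θ
  rw [hgradfun i, hgradfun j, hg i, hg j,
    (hasFDerivAt_G (α j) θ).fderiv, (hasFDerivAt_G (α i) θ).fderiv,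
    Submodule.mem_span_pair]
  set S : ℝ := ∑ m, (α i m : ℝ) * (α j m : ℝ) / θ m ^ 2 with hSdef
  refine ⟨-(S * P (α j) θ), S * P (α i) θ, ?_⟩
  ext ℓ
  have hrhs : (J (α j) θ (G (α i) θ) - J (α i) θ (G (α j) θ)) ℓ =
      (α j ℓ : ℝ) * (∑ m, g (da (α j) ℓ) m θ * g (α i) m θ) -
        (α i ℓ : ℝ) * (∑ m, g (da (α i) ℓ) m θ * g (α j) m θ) := by
    simp [J_apply, L_apply, G]
  have hlhs : (-(S * P (α j) θ) • G (α i) θ + (S * P (α i) θ) • G (α j) θ) ℓ =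
      -(S * P (α j) θ) * g (α i) ℓ θ + (S * P (α i) θ) * g (α j) ℓ θ := by
    simp [G]
  rw [hlhs, hrhs, key hθ (α j) (α i) ℓ, key hθ (α i) (α j) ℓ, g_div hθ, g_div hθ]
  have hS' : (∑ m, (α j m : ℝ) * (α i m : ℝ) / θ m ^ 2) = S :=
    Finset.sum_congr rfl fun m _ => by ring
  rw [hS', ← hSdef]
  have hℓ := hθ ℓ
  field_simp
  ring
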